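/- Let E be a finite-dimensional real inner product space, let ε > 0 and η ≥ 0. Let L : E → ℝ be twice continuously differentiable with L''(x)(v, v) ≥ ε‖v‖² for all x, v ∈ E, and let L̃ : E → ℝ be differentiable with ‖∇L̃(θ) − ∇L(θ)‖ ≤ η for all θ ∈ E. If θ_c ∈ E satisfies ∇L(θ_c) = 0 and θ_Δ ∈ E satisfies ∇L̃(θ_Δ) = 0, then ‖θ_Δ − θ_c‖ ≤ η/ε. -/

import Mathlib

open RealInnerProductSpace


/-- Quantitative core of Proposition 2: if `L` is `C²` with Hessian bounded below by
`ε` times the identity, and the perturbed loss `L̃` has gradient uniformly within `η`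
of that of `L`, then any critical point `θ_Δ` of `L̃` is within distance `η/ε` of any
critical point `θ_c` of `L`. -/
theorem perturbed_minimizer_distance_bound
    {E : Type*} [NormedAddCommGroup E] [InnerProductSpace ℝ E]
    [FiniteDimensional ℝ E]
    (ε η : ℝ) (hε : 0 < ε) (hη : 0 ≤ η)
    (L L' : E → ℝ)
    (hL : ContDiff ℝ 2 L)
    (hconv : ∀ x v : E, ε * ‖v‖ ^ 2 ≤ iteratedFDeriv ℝ 2 L x ![v, v])
    (hL' : Differentiable ℝ L')
    (hgrad : ∀ θ : E, ‖gradient L' θ - gradient L θ‖ ≤ η)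
    (θc θΔ : E) (hθc : gradient L θc = 0) (hθΔ : gradient L' θΔ = 0) :
    ‖θΔ - θc‖ ≤ η / ε := by
  set d := θΔ - θc with hd
  -- fderiv applied = inner with gradient
  have hfg : ∀ (f : E → ℝ) (x v : E), fderiv ℝ f x v = ⟪gradient f x, v⟫ := by
    intro f x v
    rw [gradient, ← InnerProductSpace.toDual_apply_apply, LinearIsometryEquiv.apply_symm_apply]
  -- L's derivative is C¹
  have hLf : ContDiff ℝ 1 (fderiv ℝ L) := by
    have : ContDiff ℝ ((1 : ℕ) + 1) L := by exact_mod_cast hL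
    exact ((contDiff_succ_iff_fderiv).mp this).2.2
  have hLfd : Differentiable ℝ (fderiv ℝ L) := hLf.differentiable one_ne_zero
  -- the function t ↦ fderiv L (θc + t • d) d and its derivative
  set φ : ℝ → ℝ := fun t => fderiv ℝ L (θc + t • d) d with hφ
  have hderiv : ∀ t : ℝ,
      HasDerivAt φ (iteratedFDeriv ℝ 2 L (θc + t • d) ![d, d]) t := by
    intro t
    have hx : HasDerivAt (fun t : ℝ => θc + t • d) d t := by
      simpa using ((hasDerivAt_id t).smul_const d).const_add θc
    have hF : HasFDerivAt (fderiv ℝ L) (fderiv ℝ (fderiv ℝ L) (θc + t • d))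
        (θc + t • d) := (hLfd _).hasFDerivAt
    have hcomp : HasDerivAt (fun t : ℝ => fderiv ℝ L (θc + t • d))
        (fderiv ℝ (fderiv ℝ L) (θc + t • d) d) t := hF.comp_hasDerivAt t hx
    have := hcomp.clm_apply (hasDerivAt_const t d)
    simp only [map_zero, add_zero] at this
    have h2 : iteratedFDeriv ℝ 2 L (θc + t • d) ![d, d]
        = fderiv ℝ (fderiv ℝ L) (θc + t • d) d d := by
      rw [iteratedFDeriv_two_apply]; rfl
    rw [h2]
    exact this
  -- monotonicity of ψ t = φ t - ε‖d‖² t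
  have hmono : Monotone (fun t => φ t - ε * ‖d‖ ^ 2 * t) := by
    apply monotone_of_deriv_nonneg
    · exact fun t => ((hderiv t).differentiableAt).sub
        ((differentiable_id.const_mul _) t)
    · intro t
      have h1 : HasDerivAt (fun t => φ t - ε * ‖d‖ ^ 2 * t)
          (iteratedFDeriv ℝ 2 L (θc + t • d) ![d, d] - ε * ‖d‖ ^ 2) t := by
        have h0 := (hderiv t).sub ((hasDerivAt_id t).const_mul (ε * ‖d‖ ^ 2)); rw [mul_one] at h0; exact h0
      rw [h1.deriv]
      have := hconv (θc + t • d) d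
      linarith
  have hm := hmono (show (0 : ℝ) ≤ 1 by norm_num)
  have hφ0 : φ 0 = 0 := by
    simp only [hφ, zero_smul, add_zero]
    rw [hfg, hθc, inner_zero_left]
  have hφ1 : φ 1 = ⟪gradient L θΔ, d⟫ := by
    have hx : θc + (1 : ℝ) • d = θΔ := by simp [hd]
    simp only [hφ, hx]
    rw [hfg]
  have hkey : ε * ‖d‖ ^ 2 ≤ ⟪gradient L θΔ, d⟫ := by
    simp only [hφ0, hφ1] at hm
    linarith [hm]
  -- bound the inner product using the gradient perturbation
  have hub : ⟪gradient L θΔ, d⟫ ≤ η * ‖d‖ := by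
    have h1 : ⟪gradient L θΔ, d⟫ = ⟪gradient L θΔ - gradient L' θΔ, d⟫ := by
      rw [hθΔ, sub_zero]
    rw [h1]
    calc ⟪gradient L θΔ - gradient L' θΔ, d⟫
        ≤ ‖gradient L θΔ - gradient L' θΔ‖ * ‖d‖ := real_inner_le_norm _ _
      _ ≤ η * ‖d‖ := by
          have := hgrad θΔ
          rw [norm_sub_rev] at this
          exact mul_le_mul_of_nonneg_right this (norm_nonneg _)
  have h2 : ε * ‖d‖ ^ 2 ≤ η * ‖d‖ := le_trans hkey hub
  rcases eq_or_lt_of_le (norm_nonneg d) with h0 | h0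
  · rw [← h0]
    positivity
  · rw [le_div_iff₀ hε]
    nlinarith
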